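/- arXiv:2409.17965 — 2 statements merged into one kernel-verified Lean document; each statement's English description precedes it below -/
import Mathlib

section
/- Let R → S be a pure homomorphism of Noetherian rings of prime characteristic p. If S is F-pure, then R is F-pure. -/
universe u

/-- `F_* A`: the ring `A` viewed as a module over itself via the Frobenius `x ↦ x ^ p`. -/
def FStar (p : ℕ) (A : Type u) : Type u := A

instance (p : ℕ) (A : Type u) [CommRing A] : AddCommGroup (FStar p A) :=
  inferInstanceAs (AddCommGroup A)

instance (p : ℕ) (A : Type u) [CommRing A] [Fact p.Prime] [CharP A p] :
    Module A (FStar p A) := Module.compHom A (frobenius A p)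

/-- The Frobenius `A → F_* A`, `x ↦ x ^ p`, as an `A`-linear map. -/
def frobeniusLinear (p : ℕ) (A : Type u) [CommRing A] [Fact p.Prime] [CharP A p] :
    A →ₗ[A] FStar p A where
  toFun x := frobenius A p x
  map_add' x y := map_add (frobenius A p) x y
  map_smul' r x := map_mul (frobenius A p) r x

/-- A ring `A` of characteristic `p` is *F-pure* if the Frobenius `A → F_* A` is a pure map of
`A`-modules, i.e. stays injective after tensoring with every `A`-module. -/
def IsFPure (p : ℕ) (A : Type u) [CommRing A] [Fact p.Prime] [CharP A p] : Prop :=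
  ∀ (P : Type u) [AddCommGroup P] [Module A P],
    Function.Injective (LinearMap.lTensor P (frobeniusLinear p A))

section Aux

variable (p : ℕ) [Fact p.Prime] (R S : Type u) [CommRing R] [CommRing S]
  [CharP R p] [CharP S p] [Algebra R S]

/-- `F_* S` as an `R`-module, via restriction along `R → S`. -/
instance (priority := low) fstarRModule : Module R (FStar p S) :=
  Module.compHom (FStar p S) (algebraMap R S)

instance fstarTower : IsScalarTower R S (FStar p S) := by
  constructor
  intro r s y
  rw [Algebra.smul_def]
  show frobenius S p (algebraMap R S r * s) * (show S from y)
      = frobenius S p (algebraMap R S r) * (frobenius S p s * (show S from y))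
  rw [map_mul, mul_assoc]

/-- The map `F_* R → F_* S` induced by `R → S`, as an `R`-linear map. -/
def fstarMap : FStar p R →ₗ[R] FStar p S where
  toFun x := algebraMap R S x
  map_add' x y := map_add (algebraMap R S) x y
  map_smul' r x := by
    show algebraMap R S (frobenius R p r * (show R from x))
        = frobenius S p (algebraMap R S r) * algebraMap R S (show R from x)
    rw [map_mul, RingHom.map_frobenius]

/-- The Frobenius of `S` as an `R`-linear map. -/
def frobeniusLinearR : S →ₗ[R] FStar p S :=
  (frobeniusLinear p S).restrictScalars R

/-- The canonical `R`-linear isomorphism `(S ⊗[R] P) ⊗[S] N ≃ P ⊗[R] N`. -/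
noncomputable def pureCancel (P : Type u) [AddCommGroup P] [Module R P]
    (N : Type u) [AddCommGroup N] [Module R N] [Module S N] [IsScalarTower R S N] :
    TensorProduct S (TensorProduct R S P) N ≃ₗ[R] TensorProduct R P N :=
  ((TensorProduct.comm S (TensorProduct R S P) N).restrictScalars R) ≪≫ₗ
    ((TensorProduct.AlgebraTensorModule.cancelBaseChange R S S N P).restrictScalars R) ≪≫ₗ
    TensorProduct.comm R N P

@[simp] lemma pureCancel_tmul (P : Type u) [AddCommGroup P] [Module R P]
    (N : Type u) [AddCommGroup N] [Module R N] [Module S N] [IsScalarTower R S N]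
    (s' : S) (x : P) (n : N) :
    pureCancel R S P N ((s' ⊗ₜ[R] x) ⊗ₜ[S] n) = x ⊗ₜ[R] (s' • n) := by
  simp [pureCancel]

end Aux

/-- If `R → S` is a pure homomorphism of Noetherian rings of prime characteristic `p`
(purity meaning that `P ≅ P ⊗[R] R → P ⊗[R] S` is injective for every `R`-module `P`)
and `S` is F-pure, then `R` is F-pure. -/
theorem isFPure_of_pure_ringHom (p : ℕ) [Fact p.Prime]
    (R S : Type u) [CommRing R] [CommRing S] [IsNoetherianRing R] [IsNoetherianRing S]
    [CharP R p] [CharP S p] [Algebra R S]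
    (hpure : ∀ (P : Type u) [AddCommGroup P] [Module R P],
      Function.Injective (LinearMap.lTensor P (Algebra.linearMap R S)))
    (hS : IsFPure p S) : IsFPure p R := by
  intro P _ _
  classical
  set Q := TensorProduct R S P with hQ
  -- the key commuting square
  have hsquare :
      (LinearMap.lTensor P (frobeniusLinearR p R S)).comp
          ((pureCancel R S P S).toLinearMap) =
        ((pureCancel R S P (FStar p S)).toLinearMap).comp
          ((LinearMap.lTensor Q (frobeniusLinear p S)).restrictScalars R) := by
    apply LinearMap.ext
    intro z
    induction z using TensorProduct.induction_on with
    | zero => simp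
    | add a b ha hb => simp_all [map_add]
    | tmul q s =>
      induction q using TensorProduct.induction_on with
      | zero => simp [TensorProduct.zero_tmul]
      | add a b ha hb => simp_all [TensorProduct.add_tmul]
      | tmul s' x =>
        simp only [LinearMap.coe_comp, Function.comp_apply, LinearEquiv.coe_coe,
          LinearMap.coe_restrictScalars, LinearMap.lTensor_tmul, pureCancel_tmul]
        congr 1
        show frobenius S p (s' • s) = frobenius S p s' * frobenius S p s
        show frobenius S p (s' * s) = frobenius S p s' * frobenius S p s
        rw [map_mul]
  -- injectivity of `P ⊗ S → P ⊗ F_* S`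
  have h1 : Function.Injective
      ⇑(((pureCancel R S P (FStar p S)).toLinearMap).comp
          ((LinearMap.lTensor Q (frobeniusLinear p S)).restrictScalars R)) := by
    rw [LinearMap.coe_comp]
    exact (pureCancel R S P (FStar p S)).injective.comp (hS Q)
  rw [← hsquare, LinearMap.coe_comp] at h1
  have hinj2 : Function.Injective ⇑(LinearMap.lTensor P (frobeniusLinearR p R S)) := by
    intro a b hab
    have h2 := h1 (a₁ := (pureCancel R S P S).symm a) (a₂ := (pureCancel R S P S).symm b)
      (by simpa using hab)
    exact (pureCancel R S P S).symm.injective h2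
  -- factor the Frobenius of `R` through `S`
  have hfactor :
      (frobeniusLinearR p R S).comp (Algebra.linearMap R S) =
        (fstarMap p R S).comp (frobeniusLinear p R) := by
    apply LinearMap.ext
    intro x
    show frobenius S p (algebraMap R S x) = algebraMap R S (frobenius R p x)
    rw [RingHom.map_frobenius]
  have hcomp : Function.Injective
      ⇑(LinearMap.lTensor P ((fstarMap p R S).comp (frobeniusLinear p R))) := by
    rw [← hfactor, LinearMap.lTensor_comp, LinearMap.coe_comp]
    exact hinj2.comp (hpure P)
  rw [LinearMap.lTensor_comp, LinearMap.coe_comp] at hcomp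
  exact hcomp.of_comp
end

section
/- Let R be a Noetherian ring of prime characteristic p. Then R is F-pure if and only if the localization R_m is F-pure for every maximal ideal m of R. -/
universe u

/-- Localizations at primes of a ring of characteristic `p` have characteristic `p`. -/
instance (R : Type u) [CommRing R] (p : ℕ) [Fact p.Prime] [CharP R p]
    (m : Ideal R) [m.IsPrime] : CharP (Localization.AtPrime m) p := by
  refine (CharP.charP_iff_prime_eq_zero Fact.out).mpr ?_
  rw [← map_natCast (algebraMap R (Localization.AtPrime m)) p, CharP.cast_eq_zero, map_zero]

namespace FPureLocal
open TensorProduct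
open TensorProduct
def fof (p : ℕ) (A : Type u) [CommRing A] : A ≃+ FStar p A := AddEquiv.refl A
variable (p : ℕ) [Fact p.Prime]
section basic
variable (A : Type u) [CommRing A] [CharP A p]
theorem smul_fof (a x : A) : a • fof p A x = fof p A (frobenius A p a * x) := rfl
theorem frobeniusLinear_eq (x : A) : frobeniusLinear p A x = fof p A (frobenius A p x) := rfl
omit [Fact p.Prime] [CharP A p] in
theorem fof_symm_fof (x : A) : (fof p A).symm (fof p A x) = x := rfl
end basic

theorem criterion (A : Type u) [CommRing A] [CharP A p]
    (P : Type u) [AddCommGroup P] [Module A P] :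
    Function.Injective (LinearMap.lTensor P (frobeniusLinear p A)) ↔
      ∀ x : P, x ⊗ₜ[A] (frobeniusLinear p A 1) = (0 : P ⊗[A] FStar p A) → x = 0 := by
  have key : ∀ z : P ⊗[A] A, LinearMap.lTensor P (frobeniusLinear p A) z
      = (TensorProduct.rid A P z) ⊗ₜ[A] (frobeniusLinear p A 1) := by
    intro z
    induction z using TensorProduct.induction_on with
    | zero => simp
    | tmul x a =>
        simp only [LinearMap.lTensor_tmul, TensorProduct.rid_tmul]
        rw [smul_tmul, ← map_smul, smul_eq_mul, mul_one]
    | add x y hx hy => simp [hx, hy, add_tmul]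
  constructor
  · intro h x hx
    have hx1 : x ⊗ₜ[A] (1 : A) = (0 : P ⊗[A] A) := by
      apply h
      rw [map_zero, key]
      simpa using hx
    have := congrArg (TensorProduct.rid A P) hx1
    simpa using this
  · intro h z₁ z₂ e
    have h0 : (TensorProduct.rid A P (z₁ - z₂)) ⊗ₜ[A] (frobeniusLinear p A 1) = 0 := by
      rw [← key, map_sub, e, sub_self]
    have h1 := h _ h0
    rw [LinearEquiv.map_eq_zero_iff] at h1
    exact sub_eq_zero.mp h1


section loc
variable (R : Type u) [CommRing R] [CharP R p] (m : Ideal R) [m.IsPrime]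

instance : Module R (FStar p (Localization.AtPrime m)) :=
  Module.compHom (FStar p (Localization.AtPrime m)) (algebraMap R (Localization.AtPrime m))

theorem smul_R_fof (r : R) (x : Localization.AtPrime m) :
    r • fof p (Localization.AtPrime m) x
      = fof p (Localization.AtPrime m)
          (frobenius (Localization.AtPrime m) p (algebraMap R (Localization.AtPrime m) r) * x) :=
  rfl

instance : IsScalarTower R (Localization.AtPrime m) (FStar p (Localization.AtPrime m)) := by
  refine ⟨fun r s x => ?_⟩
  obtain ⟨y, rfl⟩ := (fof p (Localization.AtPrime m)).surjective x
  rw [smul_fof, smul_fof, smul_R_fof]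
  congr 1
  rw [Algebra.smul_def, map_mul, mul_assoc]

/-- The Frobenius-twisted algebra map `F_* R →ₗ[R] F_* R_m`. -/
def locMap : FStar p R →ₗ[R] FStar p (Localization.AtPrime m) where
  toFun x := fof p _ (algebraMap R (Localization.AtPrime m) ((fof p R).symm x))
  map_add' x y := by simp [map_add]
  map_smul' r x := by
    obtain ⟨y, rfl⟩ := (fof p R).surjective x
    simp only [RingHom.id_apply]
    rw [smul_fof, fof_symm_fof, fof_symm_fof, map_mul, smul_R_fof]
    congr 2
    rw [frobenius_def, frobenius_def, map_pow]

theorem locMap_fof (x : R) :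
    locMap p R m (fof p R x) = fof p _ (algebraMap R (Localization.AtPrime m) x) := rfl

instance : IsLocalizedModule m.primeCompl (locMap p R m) := by
  constructor
  · intro s
    rw [Module.End.isUnit_iff]
    have hu : IsUnit (frobenius (Localization.AtPrime m) p
        (algebraMap R (Localization.AtPrime m) (s : R))) :=
      (IsLocalization.map_units (M := m.primeCompl) (Localization.AtPrime m) s).map (frobenius _ p)
    have heq : ⇑(algebraMap R (Module.End R (FStar p (Localization.AtPrime m))) (s : R))
        = fun x => fof p (Localization.AtPrime m)
          ((hu.unit : Localization.AtPrime m) * (fof p (Localization.AtPrime m)).symm x) := by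
      funext x
      obtain ⟨y, rfl⟩ := (fof p (Localization.AtPrime m)).surjective x
      rw [Module.algebraMap_end_apply, smul_R_fof, fof_symm_fof, IsUnit.unit_spec]
    rw [heq]
    exact ((fof p _).bijective.comp (Units.mulLeft_bijective hu.unit)).comp
      (fof p _).symm.bijective
  · intro y
    obtain ⟨y', rfl⟩ := (fof p (Localization.AtPrime m)).surjective y
    obtain ⟨⟨a, s⟩, h⟩ := IsLocalization.surj (M := m.primeCompl) y'
    dsimp only at h
    refine ⟨⟨fof p R (a * (s : R) ^ (p - 1)), s⟩, ?_⟩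
    have hsm : (s : m.primeCompl) • fof p (Localization.AtPrime m) y'
        = ((s : R) : R) • fof p (Localization.AtPrime m) y' := rfl
    rw [hsm, smul_R_fof, locMap_fof]
    congr 1
    have hp : p - 1 + 1 = p := Nat.succ_pred_eq_of_pos (Fact.out : p.Prime).pos
    rw [frobenius_def, map_mul, map_pow, ← h, mul_assoc, ← pow_succ', hp, mul_comm]
  · intro x₁ x₂ hx
    obtain ⟨y₁, rfl⟩ := (fof p R).surjective x₁
    obtain ⟨y₂, rfl⟩ := (fof p R).surjective x₂
    rw [locMap_fof, locMap_fof] at hx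
    have := (fof p (Localization.AtPrime m)).injective hx
    obtain ⟨c, hc⟩ := IsLocalization.exists_of_eq (M := m.primeCompl) this
    refine ⟨c, ?_⟩
    have h1 : (c : m.primeCompl) • fof p R y₁ = ((c : R) : R) • fof p R y₁ := rfl
    have h2 : (c : m.primeCompl) • fof p R y₂ = ((c : R) : R) • fof p R y₂ := rfl
    rw [h1, h2, smul_fof, smul_fof]
    congr 1
    have hp : p - 1 + 1 = p := Nat.succ_pred_eq_of_pos (Fact.out : p.Prime).pos
    simp only [frobenius_def]
    rw [← hp, pow_succ, mul_assoc, mul_assoc, hc]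

theorem isBaseChange_locMap : IsBaseChange (Localization.AtPrime m) (locMap p R m) :=
  IsLocalizedModule.isBaseChange m.primeCompl _ _

theorem locMap_frob_one :
    locMap p R m (frobeniusLinear p R 1) = frobeniusLinear p (Localization.AtPrime m) 1 := by
  rw [frobeniusLinear_eq, frobeniusLinear_eq, locMap_fof]
  congr 1
  rw [map_one, map_one, map_one]


theorem fpure_localization (hR : IsFPure p R) : IsFPure p (Localization.AtPrime m) := by
  intro Q _ _
  rw [criterion]
  intro y hy
  letI : Module R Q := Module.compHom Q (algebraMap R (Localization.AtPrime m))
  haveI : IsScalarTower R (Localization.AtPrime m) Q :=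
    ⟨fun r s q => by rw [Algebra.smul_def, mul_smul]; rfl⟩
  haveI : IsScalarTower (Localization.AtPrime m) (Localization.AtPrime m) Q :=
    ⟨fun a b q => by rw [smul_eq_mul, mul_smul]⟩
  let e1 : (Localization.AtPrime m) ⊗[R] FStar p R
      ≃ₗ[Localization.AtPrime m] FStar p (Localization.AtPrime m) :=
    (isBaseChange_locMap p R m).equiv
  let E : Q ⊗[R] FStar p R
      ≃ₗ[Localization.AtPrime m] Q ⊗[Localization.AtPrime m] FStar p (Localization.AtPrime m) :=
    (AlgebraTensorModule.cancelBaseChange R (Localization.AtPrime m) (Localization.AtPrime m)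
        Q (FStar p R)).symm ≪≫ₗ TensorProduct.congr (LinearEquiv.refl _ Q) e1
  have hE : E (y ⊗ₜ[R] frobeniusLinear p R 1)
      = y ⊗ₜ[Localization.AtPrime m] frobeniusLinear p (Localization.AtPrime m) 1 := by
    simp only [E, LinearEquiv.trans_apply, AlgebraTensorModule.cancelBaseChange_symm_tmul,
      TensorProduct.congr_tmul, LinearEquiv.refl_apply, e1, IsBaseChange.equiv_tmul, one_smul]
    rw [locMap_frob_one]
  have h0 : y ⊗ₜ[R] frobeniusLinear p R 1 = 0 := by
    apply E.injective
    rw [hE, hy, map_zero]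
  exact (criterion p R Q).mp (hR Q) y h0

theorem fpure_of_localizations
    (hL : ∀ (m : Ideal R) [m.IsMaximal], IsFPure p (Localization.AtPrime m)) : IsFPure p R := by
  intro P _ _
  rw [criterion]
  intro x hx
  by_contra hx0
  set I : Ideal R := LinearMap.ker (LinearMap.toSpanSingleton R P x) with hIdef
  have hI : I ≠ ⊤ := by
    intro htop
    apply hx0
    have h1 : (1 : R) ∈ I := htop ▸ Submodule.mem_top
    simpa using (LinearMap.mem_ker.mp h1)
  obtain ⟨m, hm, hIm⟩ := Ideal.exists_le_maximal I hI
  haveI := hm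
  haveI := hm.isPrime
  let Q := LocalizedModule m.primeCompl P
  let b : P →ₗ[R] FStar p R →ₗ[R] Q ⊗[Localization.AtPrime m] FStar p (Localization.AtPrime m) :=
    LinearMap.mk₂ R
      (fun a z => (LocalizedModule.mkLinearMap m.primeCompl P a) ⊗ₜ (locMap p R m z))
      (fun a a' z => by rw [map_add, add_tmul])
      (fun c a z => by rw [map_smul, smul_tmul'])
      (fun a z z' => by rw [map_add, tmul_add])
      (fun c a z => by
        rw [map_smul, ← algebraMap_smul (Localization.AtPrime m) c (locMap p R m z),
          tmul_smul, algebraMap_smul])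
  let Φ := TensorProduct.lift b
  have hΦ : Φ (x ⊗ₜ[R] frobeniusLinear p R 1) = 0 := by rw [hx, map_zero]
  have h2 : (LocalizedModule.mkLinearMap m.primeCompl P x)
      ⊗ₜ[Localization.AtPrime m] frobeniusLinear p (Localization.AtPrime m) 1 = 0 := by
    have : Φ (x ⊗ₜ[R] frobeniusLinear p R 1)
        = (LocalizedModule.mkLinearMap m.primeCompl P x)
            ⊗ₜ[Localization.AtPrime m] frobeniusLinear p (Localization.AtPrime m) 1 := by
      rw [show Φ (x ⊗ₜ[R] frobeniusLinear p R 1)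
          = (LocalizedModule.mkLinearMap m.primeCompl P x)
              ⊗ₜ (locMap p R m (frobeniusLinear p R 1)) from rfl, locMap_frob_one]
    rw [← this, hΦ]
  have h3 : LocalizedModule.mkLinearMap m.primeCompl P x = 0 :=
    (criterion p (Localization.AtPrime m) Q).mp (hL m Q) _ h2
  obtain ⟨s, hs⟩ := (IsLocalizedModule.eq_zero_iff m.primeCompl
    (LocalizedModule.mkLinearMap m.primeCompl P)).mp h3
  have hsx : (s : R) • x = 0 := hs
  have hsI : (s : R) ∈ I := LinearMap.mem_ker.mpr (by simpa using hsx)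
  exact s.2 (hIm hsI)

end loc
end FPureLocal

/-- A Noetherian ring `R` of prime characteristic `p` is F-pure if and only if the
localization `R_𝔪` is F-pure for every maximal ideal `𝔪` of `R`. -/
theorem isFPure_iff_forall_localization_atPrime (p : ℕ) [Fact p.Prime]
    (R : Type u) [CommRing R] [IsNoetherianRing R] [CharP R p] :
    IsFPure p R ↔ ∀ (m : Ideal R) [m.IsMaximal], IsFPure p (Localization.AtPrime m) := by
  constructor
  · intro hR m hm
    haveI := hm.isPrime
    exact FPureLocal.fpure_localization p R m hR
  · intro hL
    exact FPureLocal.fpure_of_localizations p R hL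
end
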